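/- For every x ∈ 𝕋 and every positive integer n, the measure μ satisfies the inequality μ({x}) ≤ μ({x + 2^{-n}}) + μ({x - 2^{-n}}), where the points are taken modulo 1. More generally, μ ≤ (δ_{2^{-n}} + δ_{-2^{-n}}) ⋆ μ as an inequality of positive measures on 𝕋. -/

import Mathlib

open MeasureTheory Filter Topology Real BoundedContinuousFunction
open scoped ENNReal

noncomputable section

/-- Stern's diatomic sequence: s(0)=0, s(1)=1, s(2n)=s(n), s(2n+1)=s(n)+s(n+1). -/
def stern : ℕ → ℕ
  | 0 => 0
  | 1 => 1
  | n + 2 =>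
    if h : n % 2 = 0 then stern (n / 2 + 1)
    else stern (n / 2 + 1) + stern (n / 2 + 2)
decreasing_by all_goals omega
lemma stern_one : stern 1 = 1 := by simp [stern]

lemma stern_two_mul (j : ℕ) (hj : 1 ≤ j) : stern (2 * j) = stern j := by
  obtain ⟨i, rfl⟩ := Nat.exists_eq_add_of_le hj
  have h : 2 * (1 + i) = 2 * i + 2 := by ring
  rw [h, stern]
  have h2 : 2 * i % 2 = 0 := Nat.mul_mod_right 2 i
  have h3 : 2 * i / 2 = i := by omega
  simp [h2, h3, Nat.add_comm 1 i]

lemma stern_two_mul_add_one (j : ℕ) (hj : 1 ≤ j) :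
    stern (2 * j + 1) = stern j + stern (j + 1) := by
  obtain ⟨i, rfl⟩ := Nat.exists_eq_add_of_le hj
  have h : 2 * (1 + i) + 1 = (2 * i + 1) + 2 := by ring
  rw [h, stern]
  have h1 : (2 * i + 1) % 2 = 1 := by omega
  have h2 : (2 * i + 1) / 2 = i := by omega
  simp [h1, h2, Nat.add_comm 1 i, Nat.add_assoc]

lemma stern_two_pow (k : ℕ) : stern (2 ^ k) = 1 := by
  induction k with
  | zero => exact stern_one
  | succ k ih => rw [pow_succ, mul_comm, stern_two_mul _ Nat.one_le_two_pow, ih]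

/-- periodized Stern at level k -/
def sternT (k m : ℕ) : ℕ := stern (2 ^ k + m % 2 ^ k)

lemma sternT_period (k m : ℕ) : sternT k (m + 2 ^ k) = sternT k m := by
  unfold sternT; rw [Nat.add_mod_right]

lemma sternT_of_lt {k m : ℕ} (h : m < 2 ^ k) : sternT k m = stern (2 ^ k + m) := by
  unfold sternT; rw [Nat.mod_eq_of_lt h]

lemma sternT_even (k m : ℕ) : sternT (k + 1) (2 * m) = sternT k m := by
  unfold sternT
  have h1 : 2 * m % 2 ^ (k + 1) = 2 * (m % 2 ^ k) := by
    rw [pow_succ, mul_comm (2 ^ k) 2, Nat.mul_mod_mul_left]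
  rw [h1, pow_succ, mul_comm (2 ^ k) 2, ← Nat.mul_add,
    stern_two_mul _ (by have := Nat.one_le_two_pow (n := k); omega)]

lemma stern_succ_mod (k m : ℕ) :
    stern (2 ^ k + m % 2 ^ k + 1) = stern (2 ^ k + (m + 1) % 2 ^ k) := by
  have hp : 0 < 2 ^ k := Nat.pow_pos (by norm_num)
  have hm : m % 2 ^ k < 2 ^ k := Nat.mod_lt m hp
  rcases Nat.lt_or_ge (m % 2 ^ k + 1) (2 ^ k) with h | h
  · have h2k : 2 ≤ 2 ^ k := by omega
    have : (m + 1) % 2 ^ k = m % 2 ^ k + 1 := by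
      rw [Nat.add_mod, Nat.mod_eq_of_lt (show 1 < 2 ^ k by omega),
        Nat.mod_eq_of_lt h]
    rw [this, Nat.add_assoc]
  · have he : m % 2 ^ k = 2 ^ k - 1 := by omega
    have h0 : (m + 1) % 2 ^ k = 0 := by
      rw [Nat.add_mod, he]
      rcases Nat.lt_or_ge 1 (2 ^ k) with h1 | h1
      · rw [Nat.mod_eq_of_lt h1, Nat.sub_add_cancel (by omega), Nat.mod_self]
      · have h2 : 2 ^ k = 1 := by omega
        simp [h2]
    have h3 : 2 ^ k + (2 ^ k - 1) + 1 = 2 * 2 ^ k := by omega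
    rw [he, h0, h3, stern_two_mul _ (by omega), Nat.add_zero]

lemma sternT_odd (k m : ℕ) :
    sternT (k + 1) (2 * m + 1) = sternT k m + sternT k (m + 1) := by
  unfold sternT
  have hp : 0 < 2 ^ k := Nat.pow_pos (by norm_num)
  have hm : m % 2 ^ k < 2 ^ k := Nat.mod_lt m hp
  have h1 : (2 * m + 1) % 2 ^ (k + 1) = 2 * (m % 2 ^ k) + 1 := by
    rw [Nat.add_mod, pow_succ, mul_comm (2 ^ k) 2, Nat.mul_mod_mul_left,
      Nat.mod_eq_of_lt (show 1 < 2 * 2 ^ k by omega),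
      Nat.mod_eq_of_lt (show 2 * (m % 2 ^ k) + 1 < 2 * 2 ^ k by omega)]
  rw [h1, pow_succ, mul_comm (2 ^ k) 2, show 2 * 2 ^ k + (2 * (m % 2 ^ k) + 1)
    = 2 * (2 ^ k + m % 2 ^ k) + 1 by ring,
    stern_two_mul_add_one _ (by omega)]
  rw [stern_succ_mod k m]

lemma sternT_neighbor (k m : ℕ) : sternT k (m + 1) ≤ sternT k m + sternT k (m + 2) := by
  cases k with
  | zero =>
    unfold sternT
    simp [Nat.mod_one, stern_one]
  | succ k =>
    rcases Nat.even_or_odd m with ⟨a, rfl⟩ | ⟨a, rfl⟩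
    · have h1 : sternT (k + 1) (a + a + 1) = sternT k a + sternT k (a + 1) := by
        rw [show a + a + 1 = 2 * a + 1 by ring, sternT_odd]
      have h2 : sternT (k + 1) (a + a) = sternT k a := by
        rw [show a + a = 2 * a by ring, sternT_even]
      have h3 : sternT (k + 1) (a + a + 2) = sternT k (a + 1) := by
        rw [show a + a + 2 = 2 * (a + 1) by ring, sternT_even]
      omega
    · have h1 : sternT (k + 1) (2 * a + 1 + 1) = sternT k (a + 1) := by
        rw [show 2 * a + 1 + 1 = 2 * (a + 1) by ring, sternT_even]
      have h2 : sternT (k + 1) (2 * a + 1) = sternT k a + sternT k (a + 1) := by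
        rw [sternT_odd]
      have h3 : sternT (k + 1) (2 * a + 1 + 2) = sternT k (a + 1) + sternT k (a + 2) := by
        rw [show 2 * a + 1 + 2 = 2 * (a + 1) + 1 by ring, sternT_odd]
      omega

lemma sternT_shift (j : ℕ) : ∀ k m, j < k →
    sternT k (m + 2 ^ j) ≤ sternT k m + sternT k (m + 2 ^ (j + 1)) := by
  induction j with
  | zero =>
    intro k m _
    simpa using sternT_neighbor k m
  | succ j ih =>
    intro k m hk
    obtain ⟨k, rfl⟩ : ∃ k', k = k' + 1 := ⟨k - 1, by omega⟩
    have hjk : j < k := by omega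
    rcases Nat.even_or_odd m with ⟨a, rfl⟩ | ⟨a, rfl⟩
    · have h1 : sternT (k + 1) (a + a + 2 ^ (j + 1)) = sternT k (a + 2 ^ j) := by
        rw [show a + a + 2 ^ (j + 1) = 2 * (a + 2 ^ j) by rw [pow_succ]; ring, sternT_even]
      have h2 : sternT (k + 1) (a + a) = sternT k a := by
        rw [show a + a = 2 * a by ring, sternT_even]
      have h3 : sternT (k + 1) (a + a + 2 ^ (j + 1 + 1)) = sternT k (a + 2 ^ (j + 1)) := by
        rw [show a + a + 2 ^ (j + 1 + 1) = 2 * (a + 2 ^ (j + 1)) by rw [pow_succ 2 (j+1)]; ring,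
          sternT_even]
      have key := ih k a hjk
      omega
    · have h1 : sternT (k + 1) (2 * a + 1 + 2 ^ (j + 1))
          = sternT k (a + 2 ^ j) + sternT k (a + 2 ^ j + 1) := by
        rw [show 2 * a + 1 + 2 ^ (j + 1) = 2 * (a + 2 ^ j) + 1 by rw [pow_succ]; ring, sternT_odd]
      have h2 : sternT (k + 1) (2 * a + 1) = sternT k a + sternT k (a + 1) := by
        rw [sternT_odd]
      have h3 : sternT (k + 1) (2 * a + 1 + 2 ^ (j + 1 + 1))
          = sternT k (a + 2 ^ (j + 1)) + sternT k (a + 2 ^ (j + 1) + 1) := by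
        rw [show 2 * a + 1 + 2 ^ (j + 1 + 1) = 2 * (a + 2 ^ (j + 1)) + 1 by
          rw [pow_succ 2 (j+1)]; ring, sternT_odd]
      have i1 := ih k a hjk
      have i2 := ih k (a + 1) hjk
      have e3 : a + 1 + 2 ^ j = a + 2 ^ j + 1 := by ring
      have e4 : a + 1 + 2 ^ (j + 1) = a + 2 ^ (j + 1) + 1 := by ring
      rw [e3, e4] at i2
      omega
/-- the key pointwise inequality with wrap-around -/
lemma sternT_key {n k : ℕ} (hn : 1 ≤ n) (hk : n ≤ k) (m : ℕ) :
    sternT k m ≤ sternT k (m + 2 ^ (k - n)) + sternT k (m + (2 ^ k - 2 ^ (k - n))) := by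
  have hj : k - n < k := by omega
  have hle : 2 ^ (k - n) ≤ 2 ^ k := Nat.pow_le_pow_right (by norm_num) (by omega)
  have h2 : 2 ^ (k - n + 1) ≤ 2 ^ k := Nat.pow_le_pow_right (by norm_num) (by omega)
  have key := sternT_shift (k - n) k (m + (2 ^ k - 2 ^ (k - n))) hj
  have e1 : m + (2 ^ k - 2 ^ (k - n)) + 2 ^ (k - n) = m + 2 ^ k := by omega
  have e2 : m + (2 ^ k - 2 ^ (k - n)) + 2 ^ (k - n + 1) = (m + 2 ^ (k - n)) + 2 ^ k := by
    rw [pow_succ] at *; omega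
  rw [e1, e2, sternT_period, sternT_period] at key
  omega

open Finset in
lemma sum_range_shift (F : ℕ → ℝ) (N : ℕ) (hF : ∀ m, F (m + N) = F m) (c : ℕ) :
    ∑ m ∈ Finset.range N, F (m + c) = ∑ m ∈ Finset.range N, F m := by
  induction c with
  | zero => simp
  | succ c ih =>
    have key : ∑ m ∈ Finset.range N, F (m + 1 + c) = ∑ m ∈ Finset.range N, F (m + c) := by
      have h1 := Finset.sum_range_succ' (fun m => F (m + c)) N
      have h2 := Finset.sum_range_succ (fun m => F (m + c)) N
      rw [h2] at h1
      have h3 : F (N + c) = F (0 + c) := by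
        rw [show N + c = c + N by ring, hF, Nat.zero_add]
      linarith
    calc ∑ m ∈ Finset.range N, F (m + (c + 1))
        = ∑ m ∈ Finset.range N, F (m + 1 + c) :=
          Finset.sum_congr rfl fun m _ => by congr 1; ring
      _ = ∑ m ∈ Finset.range N, F (m + c) := key
      _ = ∑ m ∈ Finset.range N, F m := ih

open Finset in
lemma sum_key_ineq {n k : ℕ} (hn : 1 ≤ n) (hk : n ≤ k) (g : ℕ → ℝ)
    (hg_per : ∀ m, g (m + 2 ^ k) = g m) (hg0 : ∀ m, 0 ≤ g m) :
    ∑ m ∈ Finset.range (2 ^ k), (sternT k m : ℝ) * g m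
      ≤ (∑ m ∈ Finset.range (2 ^ k), (sternT k m : ℝ) * g (m + 2 ^ (k - n)))
        + ∑ m ∈ Finset.range (2 ^ k), (sternT k m : ℝ) * g (m + (2 ^ k - 2 ^ (k - n))) := by
  set N := 2 ^ k with hN
  set h := 2 ^ (k - n) with hh
  have hle : h ≤ N := Nat.pow_le_pow_right (by norm_num) (by omega)
  -- reindex the two right-hand sums
  have r1 : ∑ m ∈ Finset.range N, (sternT k m : ℝ) * g (m + h)
      = ∑ m ∈ Finset.range N, (sternT k (m + (N - h)) : ℝ) * g m := by
    have := sum_range_shift (fun m => (sternT k (m + (N - h)) : ℝ) * g m) N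
      (fun m => show (sternT k (m + N + (N - h)) : ℝ) * g (m + N)
          = (sternT k (m + (N - h)) : ℝ) * g m by
        rw [show m + N + (N - h) = (m + (N - h)) + N by omega, sternT_period, hg_per]) h
    rw [← this]
    refine Finset.sum_congr rfl fun m _ => ?_
    show (sternT k m : ℝ) * g (m + h) = (sternT k (m + h + (N - h)) : ℝ) * g (m + h)
    rw [show m + h + (N - h) = m + N by omega, sternT_period]
  have r2 : ∑ m ∈ Finset.range N, (sternT k m : ℝ) * g (m + (N - h))
      = ∑ m ∈ Finset.range N, (sternT k (m + h) : ℝ) * g m := by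
    have := sum_range_shift (fun m => (sternT k (m + h) : ℝ) * g m) N
      (fun m => show (sternT k (m + N + h) : ℝ) * g (m + N)
          = (sternT k (m + h) : ℝ) * g m by
        rw [show m + N + h = (m + h) + N by omega, sternT_period, hg_per]) (N - h)
    rw [← this]
    refine Finset.sum_congr rfl fun m _ => ?_
    show (sternT k m : ℝ) * g (m + (N - h)) = (sternT k (m + (N - h) + h) : ℝ) * g (m + (N - h))
    rw [show m + (N - h) + h = m + N by omega, sternT_period]
  rw [r1, r2, ← Finset.sum_add_distrib]
  refine Finset.sum_le_sum fun m _ => ?_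
  rw [← add_mul]
  apply mul_le_mul_of_nonneg_right _ (hg0 m)
  have hkey := sternT_key hn hk m
  rw [← hN, ← hh] at hkey
  have : sternT k m ≤ sternT k (m + (N - h)) + sternT k (m + h) := by omega
  exact_mod_cast this

/-- The probability measure μ_n = 3^{-n} ∑_{m=0}^{2^n-1} s(2^n+m) δ_{m/2^n} on the 1-torus. -/
def sternMeasure (n : ℕ) : Measure UnitAddCircle :=
  ((3 : ℝ≥0∞) ^ n)⁻¹ • ∑ m ∈ Finset.range (2 ^ n),
    (stern (2 ^ n + m) : ℝ≥0∞) • Measure.dirac ((m / 2 ^ n : ℝ) : UnitAddCircle)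
lemma integrable_cm (f : C(UnitAddCircle, ℝ)) (μ : Measure UnitAddCircle) [IsFiniteMeasure μ] :
    Integrable (⇑f) μ :=
  (BoundedContinuousFunction.mkOfCompact f).integrable μ

lemma integral_sternMeasure (k : ℕ) (f : C(UnitAddCircle, ℝ)) :
    ∫ x, f x ∂(sternMeasure k)
      = ((3 : ℝ) ^ k)⁻¹ * ∑ m ∈ Finset.range (2 ^ k),
          (stern (2 ^ k + m) : ℝ) * f (((m : ℝ) / 2 ^ k : ℝ) : UnitAddCircle) := by
  unfold sternMeasure
  rw [integral_smul_measure, integral_finset_sum_measure (fun i _ =>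
    (integrable_cm f _).smul_measure (ENNReal.natCast_ne_top _))]
  simp only [integral_smul_measure, integral_dirac]
  rw [smul_eq_mul]
  congr 1
  simp [ENNReal.toReal_inv]

lemma two_pow_div (n k : ℕ) (hk : n ≤ k) :
    ((2 : ℝ) ^ (k - n)) / 2 ^ k = ((2 : ℝ) ^ n)⁻¹ := by
  rw [div_eq_iff (by positivity), inv_mul_eq_div, eq_div_iff (by positivity),
    ← pow_add]
  congr 1
  omega

lemma integral_sternMeasure_le {n k : ℕ} (hn : 1 ≤ n) (hk : n ≤ k) (f : C(UnitAddCircle, ℝ))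
    (hf : ∀ x, 0 ≤ f x) :
    ∫ x, f x ∂(sternMeasure k)
      ≤ (∫ x, f (x + ((((2 : ℝ) ^ n)⁻¹ : ℝ) : UnitAddCircle)) ∂(sternMeasure k))
        + ∫ x, f (x - ((((2 : ℝ) ^ n)⁻¹ : ℝ) : UnitAddCircle)) ∂(sternMeasure k) := by
  set a : UnitAddCircle := ((((2 : ℝ) ^ n)⁻¹ : ℝ) : UnitAddCircle) with ha
  set fp : C(UnitAddCircle, ℝ) := f.comp ⟨fun x => x + a, by continuity⟩ with hfp
  set fm : C(UnitAddCircle, ℝ) := f.comp ⟨fun x => x - a, by continuity⟩ with hfm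
  have hfp' : ∀ x, fp x = f (x + a) := fun x => rfl
  have hfm' : ∀ x, fm x = f (x - a) := fun x => rfl
  rw [show (∫ x, f (x + a) ∂(sternMeasure k)) = ∫ x, fp x ∂(sternMeasure k) from rfl,
    show (∫ x, f (x - a) ∂(sternMeasure k)) = ∫ x, fm x ∂(sternMeasure k) from rfl,
    integral_sternMeasure, integral_sternMeasure, integral_sternMeasure]
  set N := 2 ^ k with hN
  set h := 2 ^ (k - n) with hh
  have hle : h ≤ N := Nat.pow_le_pow_right (by norm_num) (by omega)
  have h2k : (0 : ℝ) < 2 ^ k := by positivity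
  set g : ℕ → ℝ := fun m => f (((m : ℝ) / 2 ^ k : ℝ) : UnitAddCircle) with hg
  have hratio : ((h : ℝ)) / 2 ^ k = ((2 : ℝ) ^ n)⁻¹ := by
    rw [hh]; push_cast; exact two_pow_div n k hk
  have hper : ∀ m : ℕ, g (m + N) = g m := by
    intro m
    have : ((((m : ℕ) + N : ℕ) : ℝ) / 2 ^ k : ℝ) = (m : ℝ) / 2 ^ k + 1 := by
      push_cast [hN]
      field_simp
    simp only [hg, this, AddCircle.coe_add_period]
  have hA : ∀ m : ℕ, g (m + h) = f ((((m : ℝ) / 2 ^ k : ℝ) : UnitAddCircle) + a) := by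
    intro m
    have e : ((((m : ℕ) + h : ℕ) : ℝ) / 2 ^ k : ℝ) = (m : ℝ) / 2 ^ k + ((2 : ℝ) ^ n)⁻¹ := by
      push_cast
      rw [add_div, hratio]
    simp only [hg, e, AddCircle.coe_add, ha]
  have hB : ∀ m : ℕ, g (m + (N - h)) = f ((((m : ℝ) / 2 ^ k : ℝ) : UnitAddCircle) - a) := by
    intro m
    have e : ((((m : ℕ) + (N - h) : ℕ) : ℝ) / 2 ^ k : ℝ)
        = ((m : ℝ) / 2 ^ k - ((2 : ℝ) ^ n)⁻¹) + 1 := by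
      push_cast [Nat.cast_sub hle, hN, Nat.cast_sub (show h ≤ 2 ^ k from hle)]
      rw [← hratio]
      field_simp
      ring
    simp only [hg, e, AddCircle.coe_add_period, AddCircle.coe_sub, ha]
  have hg0 : ∀ m, 0 ≤ g m := fun m => hf _
  have key := sum_key_ineq hn hk g hper hg0
  have hsum : ∀ F : ℕ → ℝ, ∑ m ∈ Finset.range N, (stern (2 ^ k + m) : ℝ) * F m
      = ∑ m ∈ Finset.range N, (sternT k m : ℝ) * F m := by
    intro F
    exact Finset.sum_congr rfl fun m hm => by
      rw [sternT_of_lt (Finset.mem_range.mp hm)]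
  rw [hsum (fun m => f _), hsum (fun m => fp _), hsum (fun m => fm _)]
  have e1 : ∀ m : ℕ, fp ((((m : ℝ) / 2 ^ k : ℝ) : UnitAddCircle)) = g (m + h) := by
    intro m; rw [hfp' _, hA]
  have e2 : ∀ m : ℕ, fm ((((m : ℝ) / 2 ^ k : ℝ) : UnitAddCircle)) = g (m + (N - h)) := by
    intro m; rw [hfm' _, hB]
  calc ((3 : ℝ) ^ k)⁻¹ * ∑ m ∈ Finset.range N, (sternT k m : ℝ) * g m
      ≤ ((3 : ℝ) ^ k)⁻¹ * ((∑ m ∈ Finset.range N, (sternT k m : ℝ) * g (m + h))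
          + ∑ m ∈ Finset.range N, (sternT k m : ℝ) * g (m + (N - h))) := by
        apply mul_le_mul_of_nonneg_left key (by positivity)
    _ = _ := by
        rw [mul_add]
        congr 1
        · congr 1
          exact Finset.sum_congr rfl fun m _ => by rw [e1 m]
        · congr 1
          exact Finset.sum_congr rfl fun m _ => by rw [e2 m]

lemma measure_le_of_forall_integral_le {μ ρ : Measure UnitAddCircle}
    [IsFiniteMeasure μ] [IsFiniteMeasure ρ]
    (h : ∀ f : C(UnitAddCircle, ℝ), (∀ x, 0 ≤ f x) → ∫ x, f x ∂μ ≤ ∫ x, f x ∂ρ) :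
    μ ≤ ρ := by
  have hbc : ∀ g : BoundedContinuousFunction UnitAddCircle NNReal, ∫⁻ x, (g x : ℝ≥0∞) ∂μ ≤ ∫⁻ x, (g x : ℝ≥0∞) ∂ρ := by
    intro g
    set f : C(UnitAddCircle, ℝ) := ⟨fun x => (g x : ℝ), NNReal.continuous_coe.comp g.continuous⟩
      with hf
    have h1 : ∫⁻ x, (g x : ℝ≥0∞) ∂μ = ENNReal.ofReal (∫ x, f x ∂μ) :=
      lintegral_coe_eq_integral (fun x => g x) (integrable_cm f μ)
    have h2 : ∫⁻ x, (g x : ℝ≥0∞) ∂ρ = ENNReal.ofReal (∫ x, f x ∂ρ) :=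
      lintegral_coe_eq_integral (fun x => g x) (integrable_cm f ρ)
    rw [h1, h2]
    exact ENNReal.ofReal_le_ofReal (h f fun x => (g x).2)
  rw [Measure.le_iff]
  intro s hs
  rw [MeasurableSet.measure_eq_iSup_isCompact_of_ne_top hs (measure_ne_top μ s)]
  refine iSup_le fun K => iSup_le fun hKs => iSup_le fun hKc => ?_
  have hcl : IsClosed K := hKc.isClosed
  have hKle : μ K ≤ ρ K :=
    le_of_tendsto_of_tendsto (HasOuterApproxClosed.tendsto_lintegral_apprSeq hcl μ)
      (HasOuterApproxClosed.tendsto_lintegral_apprSeq hcl ρ)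
      (Eventually.of_forall fun m => hbc _)
  exact hKle.trans (measure_mono hKs)

lemma dirac_conv_eq (c : UnitAddCircle) (μ : Measure UnitAddCircle) [SFinite μ] :
    (Measure.dirac c).conv μ = μ.map (fun x => c + x) := by
  unfold Measure.conv
  rw [Measure.dirac_prod, Measure.map_map (by fun_prop) (by fun_prop)]
  rfl

/-- For every x ∈ 𝕋 and n ≥ 1: μ({x}) ≤ μ({x + 2^{-n}}) + μ({x - 2^{-n}}); more generally
μ ≤ (δ_{2^{-n}} + δ_{-2^{-n}}) ⋆ μ as an inequality of positive measures on 𝕋. -/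
theorem sternLimit_atom_inequality (μ : Measure UnitAddCircle)
    (hμ : IsProbabilityMeasure μ)
    (hlim : ∀ f : C(UnitAddCircle, ℝ),
      Tendsto (fun n => ∫ x, f x ∂(sternMeasure n)) atTop (𝓝 (∫ x, f x ∂μ)))
    (n : ℕ) (hn : 1 ≤ n) :
    (∀ x : UnitAddCircle,
      μ {x} ≤ μ {x + (((((2 : ℝ) ^ n)⁻¹ : ℝ)) : UnitAddCircle)}
            + μ {x - (((((2 : ℝ) ^ n)⁻¹ : ℝ)) : UnitAddCircle)}) ∧
    μ ≤ (Measure.dirac (((((2 : ℝ) ^ n)⁻¹ : ℝ)) : UnitAddCircle)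
          + Measure.dirac (((-(((2 : ℝ) ^ n)⁻¹) : ℝ)) : UnitAddCircle)).conv μ := by
  set aR : ℝ := ((2 : ℝ) ^ n)⁻¹ with haR
  set a : UnitAddCircle := (aR : UnitAddCircle) with ha
  have hb : ((-aR : ℝ) : UnitAddCircle) = -a := AddCircle.coe_neg _
  have hmeas_a : Measurable (fun x : UnitAddCircle => a + x) := measurable_const_add a
  have hmeas_b : Measurable (fun x : UnitAddCircle => -a + x) := measurable_const_add (-a)
  set ρ : Measure UnitAddCircle := μ.map (fun x => a + x) + μ.map (fun x => -a + x) with hρ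
  have hρ_eq : (Measure.dirac a + Measure.dirac ((-aR : ℝ) : UnitAddCircle)).conv μ = ρ := by
    rw [hb, Measure.add_conv, dirac_conv_eq, dirac_conv_eq]
  have hρfin : IsFiniteMeasure ρ := by
    rw [hρ]; infer_instance
  -- the integral inequality against ρ
  have hint : ∀ f : C(UnitAddCircle, ℝ), (∀ x, 0 ≤ f x) →
      ∫ x, f x ∂μ ≤ ∫ x, f x ∂ρ := by
    intro f hf
    set fp : C(UnitAddCircle, ℝ) := f.comp ⟨fun x => x + a, by continuity⟩ with hfp
    set fm : C(UnitAddCircle, ℝ) := f.comp ⟨fun x => x - a, by continuity⟩ with hfm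
    have step1 : ∫ x, f x ∂μ ≤ (∫ x, fp x ∂μ) + ∫ x, fm x ∂μ := by
      refine le_of_tendsto_of_tendsto (hlim f) ((hlim fp).add (hlim fm))
        (eventually_atTop.mpr ⟨n, fun k hk => ?_⟩)
      exact integral_sternMeasure_le hn hk f hf
    have e1 : ∫ x, fp x ∂μ = ∫ x, f x ∂(μ.map (fun x => a + x)) := by
      rw [integral_map hmeas_a.aemeasurable f.continuous.aestronglyMeasurable]
      congr 1
      funext x
      show f (x + a) = f (a + x)
      rw [add_comm]
    have e2 : ∫ x, fm x ∂μ = ∫ x, f x ∂(μ.map (fun x => -a + x)) := by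
      rw [integral_map hmeas_b.aemeasurable f.continuous.aestronglyMeasurable]
      congr 1
      funext x
      show f (x - a) = f (-a + x)
      rw [sub_eq_neg_add]
    have e3 : ∫ x, f x ∂ρ = (∫ x, f x ∂(μ.map (fun x => a + x)))
        + ∫ x, f x ∂(μ.map (fun x => -a + x)) := by
      rw [hρ]
      exact integral_add_measure (integrable_cm f _) (integrable_cm f _)
    rw [e3, ← e1, ← e2]
    exact step1
  have hle : μ ≤ ρ := measure_le_of_forall_integral_le hint
  constructor
  · intro x
    have hx : μ {x} ≤ ρ {x} := Measure.le_iff'.mp hle {x}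
    have hx1 : ρ {x} = μ {x - a} + μ {x + a} := by
      rw [hρ, Measure.add_apply, Measure.map_apply hmeas_a (measurableSet_singleton x),
        Measure.map_apply hmeas_b (measurableSet_singleton x)]
      congr 1
      · congr 1
        ext y
        simp only [Set.mem_preimage, Set.mem_singleton_iff]
        constructor
        · intro h; rw [← h]; abel
        · intro h; rw [h]; abel
      · congr 1
        ext y
        simp only [Set.mem_preimage, Set.mem_singleton_iff]
        constructor
        · intro h; rw [← h]; abel
        · intro h; rw [h]; abel
    rw [hx1] at hx
    exact hx.trans (le_of_eq (add_comm _ _))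
  · rw [hρ_eq]
    exact hle
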